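/- (Jordan-block moment lemma, eq. (19)) Let s ∈ ℂ not be an eigenvalue of A, let r ≥ 1, and let J(s,r) ∈ ℂ^{r×r} be the Jordan block with eigenvalue s. If Π̃ ∈ ℂ^{n×r} and M̃ ∈ ℂ^{m×r} satisfy the Sylvester equation Π̃·J(s,r) = AΠ̃ + BM̃ (with A, B complexified), then CΠ̃ + DM̃ = Σ_{k=0}^{r−1} η_k(s)·M̃·(s·I_r − J(s,r))^k. -/

import Mathlib

open Matrix

/-- The `r × r` Jordan block with eigenvalue `s` (s on the diagonal, 1 on the
superdiagonal). -/
def jordanBlock (s : ℂ) (r : ℕ) : Matrix (Fin r) (Fin r) ℂ :=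
  Matrix.of fun i j => if (i : ℕ) = (j : ℕ) then s
    else if (i : ℕ) + 1 = (j : ℕ) then 1 else 0

/-- The `k`-moment of `(A,B,C,D)` at `s`: `η_0(s) = C(sI-A)⁻¹B + D` and
`η_k(s) = C(sI-A)^{-(k+1)}B` for `k ≥ 1` (all matrices complexified). -/
noncomputable def kMoment {n m p : ℕ}
    (A : Matrix (Fin n) (Fin n) ℝ) (B : Matrix (Fin n) (Fin m) ℝ)
    (C : Matrix (Fin p) (Fin n) ℝ) (D : Matrix (Fin p) (Fin m) ℝ)
    (s : ℂ) (k : ℕ) : Matrix (Fin p) (Fin m) ℂ :=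
  if k = 0 then
    C.map Complex.ofReal * (s • (1 : Matrix (Fin n) (Fin n) ℂ) - A.map Complex.ofReal)⁻¹ *
      B.map Complex.ofReal + D.map Complex.ofReal
  else
    C.map Complex.ofReal *
      ((s • (1 : Matrix (Fin n) (Fin n) ℂ) - A.map Complex.ofReal)⁻¹) ^ (k + 1) *
      B.map Complex.ofReal

/-- Entries of powers of `sI - J(s,r)` vanish below the `k`-th superdiagonal. -/
lemma jordan_nilp_aux (s : ℂ) (r : ℕ) :
    ∀ (k : ℕ) (i j : Fin r), (j : ℕ) < (i : ℕ) + k →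
    ((s • (1 : Matrix (Fin r) (Fin r) ℂ) - jordanBlock s r) ^ k) i j = 0 := by
  intro k
  induction k with
  | zero =>
    intro i j h
    simp only [pow_zero]
    rw [Matrix.one_apply_ne]
    intro he; subst he; omega
  | succ k ih =>
    intro i j h
    rw [pow_succ, Matrix.mul_apply]
    apply Finset.sum_eq_zero
    intro l _
    by_cases hl : (l : ℕ) < (i : ℕ) + k
    · rw [ih i l hl, zero_mul]
    · have hNl : (s • (1 : Matrix (Fin r) (Fin r) ℂ) - jordanBlock s r) l j = 0 := by
        simp only [Matrix.sub_apply, Matrix.smul_apply, Matrix.one_apply, jordanBlock,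
          Matrix.of_apply]
        by_cases hlj : l = j
        · simp [hlj]
        · have hlj' : (l : ℕ) ≠ (j : ℕ) := fun hh => hlj (Fin.ext hh)
          have : (l : ℕ) + 1 ≠ (j : ℕ) := by omega
          simp [hlj, hlj', this]
      rw [hNl, mul_zero]

/-- `sI - J(s,r)` is nilpotent of index at most `r`. -/
lemma jordan_nilp (s : ℂ) (r : ℕ) :
    (s • (1 : Matrix (Fin r) (Fin r) ℂ) - jordanBlock s r) ^ r = 0 := by
  ext i j
  rw [jordan_nilp_aux s r r i j (by omega)]
  simp

/-- **Jordan-block moment lemma.** If `s` is not an eigenvalue of `A`, `r ≥ 1`,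
and `Π̃ J(s,r) = AΠ̃ + BM̃`, then `CΠ̃ + DM̃ = Σ_{k=0}^{r-1} η_k(s) M̃ (sI_r - J(s,r))^k`. -/
theorem jordan_block_moment (n m p : ℕ)
    (A : Matrix (Fin n) (Fin n) ℝ) (B : Matrix (Fin n) (Fin m) ℝ)
    (C : Matrix (Fin p) (Fin n) ℝ) (D : Matrix (Fin p) (Fin m) ℝ)
    (s : ℂ) (hs : s ∉ spectrum ℂ (A.map Complex.ofReal))
    (r : ℕ) (hr : 1 ≤ r)
    (Pit : Matrix (Fin n) (Fin r) ℂ) (Mt : Matrix (Fin m) (Fin r) ℂ)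
    (hsyl : Pit * jordanBlock s r = A.map Complex.ofReal * Pit + B.map Complex.ofReal * Mt) :
    C.map Complex.ofReal * Pit + D.map Complex.ofReal * Mt =
      ∑ k ∈ Finset.range r,
        kMoment A B C D s k * Mt *
          (s • (1 : Matrix (Fin r) (Fin r) ℂ) - jordanBlock s r) ^ k := by
  set A' := A.map Complex.ofReal with hA'
  set B' := B.map Complex.ofReal with hB'
  set C' := C.map Complex.ofReal with hC'
  set D' := D.map Complex.ofReal with hD'
  set E := s • (1 : Matrix (Fin n) (Fin n) ℂ) - A' with hEdef
  set N := s • (1 : Matrix (Fin r) (Fin r) ℂ) - jordanBlock s r with hNdef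
  have hE : IsUnit E := by
    rw [spectrum.notMem_iff] at hs
    rwa [Algebra.algebraMap_eq_smul_one] at hs
  have hdet : IsUnit E.det := (Matrix.isUnit_iff_isUnit_det E).mp hE
  have hinv : E⁻¹ * E = 1 := Matrix.nonsing_inv_mul E hdet
  have hJ : jordanBlock s r = s • (1 : Matrix (Fin r) (Fin r) ℂ) - N := by
    rw [hNdef, sub_sub_cancel]
  have hkey : E * Pit = Pit * N + B' * Mt := by
    rw [hJ, Matrix.mul_sub, Matrix.mul_smul, Matrix.mul_one] at hsyl
    rw [hEdef, Matrix.sub_mul, Matrix.smul_mul, Matrix.one_mul]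
    rw [sub_eq_iff_eq_add] at hsyl ⊢
    rw [hsyl]; abel
  have hstep : Pit = E⁻¹ * (Pit * N) + E⁻¹ * (B' * Mt) := by
    calc Pit = (E⁻¹ * E) * Pit := by rw [hinv, Matrix.one_mul]
    _ = E⁻¹ * (E * Pit) := by rw [Matrix.mul_assoc]
    _ = E⁻¹ * (Pit * N) + E⁻¹ * (B' * Mt) := by rw [hkey, Matrix.mul_add]
  have htel : ∀ j : ℕ, Pit =
      (∑ k ∈ Finset.range j, E⁻¹ ^ (k + 1) * (B' * Mt) * N ^ k) +
        E⁻¹ ^ j * Pit * N ^ j := by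
    intro j
    induction j with
    | zero => simp
    | succ j ih =>
      have hterm : E⁻¹ ^ j * Pit * N ^ j =
          E⁻¹ ^ (j + 1) * (B' * Mt) * N ^ j + E⁻¹ ^ (j + 1) * Pit * N ^ (j + 1) := by
        have hc : N * N ^ j = N ^ j * N := by rw [← pow_succ, ← pow_succ']
        conv_lhs => rw [hstep]
        simp only [pow_succ, Matrix.mul_add, Matrix.add_mul, Matrix.mul_assoc, hc]
        rw [add_comm]
      conv_lhs => rw [ih]
      rw [hterm, Finset.sum_range_succ, add_assoc]
  have hPit : Pit = ∑ k ∈ Finset.range r, E⁻¹ ^ (k + 1) * (B' * Mt) * N ^ k := by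
    have := htel r
    rw [jordan_nilp s r] at this
    simpa using this
  have hterm : ∀ k ∈ Finset.range r, kMoment A B C D s k * Mt * N ^ k =
      C' * (E⁻¹ ^ (k + 1) * (B' * Mt) * N ^ k) + (if k = 0 then D' * Mt else 0) := by
    intro k _
    by_cases hk : k = 0
    · subst hk
      simp [kMoment, Matrix.add_mul, Matrix.mul_assoc]
      rfl
    · simp only [kMoment, if_neg hk]
      simp only [Matrix.mul_assoc, add_zero]
      rfl
  rw [hPit, Finset.sum_congr rfl hterm, Finset.sum_add_distrib, Matrix.mul_sum,
    Finset.sum_ite_eq' (Finset.range r) 0 (fun _ => D' * Mt)]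
  rw [if_pos (Finset.mem_range.mpr hr)]
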